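/- Let G be a connected graph and H a connected graph with v(H) < v(G)/2. Then there are at most ⌊v(G)/(v(H)+1)⌋ vertices v of G such that G − v has a connected component isomorphic to H. -/
import Mathlib


open SimpleGraph

/-- The vertex-deleted subgraph `G - v`: the induced subgraph on the remaining vertices. -/
def deleteVert {V : Type*} (G : SimpleGraph V) (v : V) : SimpleGraph {w : V // w ≠ v} :=
  G.induce {w : V | w ≠ v}

/-- `G` contains a cycle. -/
def HasCycleG {V : Type*} (G : SimpleGraph V) : Prop :=
  ∃ (u : V) (c : G.Walk u u), c.IsCycle

/-- `G` contains at least two distinct cycles (distinct as subgraphs,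
i.e. with different edge sets). -/
def TwoCycles {V : Type*} (G : SimpleGraph V) : Prop :=
  ∃ (u v : V) (c : G.Walk u u) (c' : G.Walk v v),
    c.IsCycle ∧ c'.IsCycle ∧ ¬ (∀ e, e ∈ c.edges ↔ e ∈ c'.edges)

/-- `G` contains exactly one cycle: it has a cycle, and any two cycles are equal
as subgraphs (have the same edge set). -/
def Unicyclic {V : Type*} (G : SimpleGraph V) : Prop :=
  HasCycleG G ∧ ∀ (u v : V) (c : G.Walk u u) (c' : G.Walk v v),
    c.IsCycle → c'.IsCycle → ∀ e, e ∈ c.edges ↔ e ∈ c'.edges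

/-- `F` and `G` have at least `k` common cards, i.e. the multiset intersection of their
decks has size at least `k`: there are `k` distinct vertices of `F` and `k` distinct
vertices of `G` whose corresponding vertex-deleted subgraphs are pairwise isomorphic. -/
def CommonCards {V W : Type*} (F : SimpleGraph V) (G : SimpleGraph W) (k : ℕ) : Prop :=
  ∃ (f : Fin k ↪ V) (g : Fin k ↪ W),
    ∀ i, Nonempty (deleteVert F (f i) ≃g deleteVert G (g i))

section Helpers
variable {V W : Type*} {G : SimpleGraph V} {H : SimpleGraph W}

lemma frontier_lemma {C : Set V} : ∀ {x y : V}, G.Walk x y → x ∈ C → y ∉ C →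
    ∃ a ∈ C, ∃ b, b ∉ C ∧ G.Adj a b := by
  intro x y p
  induction p with
  | nil => intro h h'; exact absurd h h'
  | @cons x z y h p ih =>
    intro hx hy
    by_cases hm : z ∈ C
    · exact ih hm hy
    · exact ⟨x, hx, z, hm, h⟩

lemma reachable_of_mem_support : ∀ {x y : V} (p : G.Walk x y) {u : V},
    u ∈ p.support → G.Reachable x u := by
  intro x y p
  induction p with
  | nil => intro u hu; simp at hu; subst hu; rfl
  | @cons x z y h p ih =>
    intro u hu
    rw [Walk.support_cons, List.mem_cons] at hu
    rcases hu with rfl | hu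
    · rfl
    · exact h.reachable.trans (ih hu)

lemma walk_transfer {a b : V} : ∀ {x z : {w : V // w ≠ a}} (p : (deleteVert G a).Walk x z),
    (∀ u ∈ p.support, (u : V) ≠ b) → ∀ (hx : (x : V) ≠ b) (hz : (z : V) ≠ b),
    (deleteVert G b).Reachable ⟨x, hx⟩ ⟨z, hz⟩ := by
  intro x z p
  induction p with
  | nil => intro _ hx hz; exact Reachable.refl _
  | @cons x y z h p ih =>
    intro hsupp hx hz
    have hy : (y : V) ≠ b := hsupp y (by simp [Walk.support_cons])
    have hadj : (deleteVert G b).Adj ⟨x, hx⟩ ⟨y, hy⟩ := h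
    exact hadj.reachable.trans (ih (fun u hu => hsupp u (by simp [Walk.support_cons, hu])) hy hz)

lemma mem_supp_of_adj {v : V} {c : (deleteVert G v).ConnectedComponent}
    {x : {w : V // w ≠ v}} (hx : x ∈ c.supp) {y : V} (hy : y ≠ v) (h : G.Adj x y) :
    (⟨y, hy⟩ : {w : V // w ≠ v}) ∈ c.supp := by
  rw [ConnectedComponent.mem_supp_iff] at hx ⊢
  rw [← hx]
  exact ConnectedComponent.eq.mpr
    (Adj.reachable (show (deleteVert G v).Adj ⟨y, hy⟩ x from h.symm))

lemma reach_avoid {v : V} : ∀ {x : V} (p : G.Walk x v) (hx : x ≠ v),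
    ∃ a, ∃ ha : a ≠ v, G.Adj a v ∧ (deleteVert G v).Reachable ⟨x, hx⟩ ⟨a, ha⟩ := by
  intro x p
  induction p with
  | nil => intro hx; exact absurd rfl hx
  | @cons x y v h p ih =>
    intro hx
    by_cases hy : y = v
    · subst hy; exact ⟨x, hx, h, Reachable.refl _⟩
    · obtain ⟨a, ha, hadj, hr⟩ := ih hy
      have hadj2 : (deleteVert G v).Adj ⟨x, hx⟩ ⟨y, hy⟩ := h
      exact ⟨a, ha, hadj, hadj2.reachable.trans hr⟩

lemma card_supp [Fintype W] {v : V} {c : (deleteVert G v).ConnectedComponent}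
    (e : ((deleteVert G v).induce c.supp ≃g H)) :
    (Subtype.val '' c.supp).ncard = Fintype.card W := by
  rw [Set.ncard_image_of_injective _ Subtype.val_injective]
  rw [← Nat.card_coe_set_eq, Nat.card_congr e.toEquiv, Nat.card_eq_fintype_card]

lemma notMem_other [Fintype V] [Fintype W]
    (hG : G.Connected) (hsize : 2 * Fintype.card W < Fintype.card V)
    {v v' : V}
    {c : (deleteVert G v).ConnectedComponent} {c' : (deleteVert G v').ConnectedComponent}
    (e : ((deleteVert G v).induce c.supp ≃g H))
    (e' : ((deleteVert G v').induce c'.supp ≃g H))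
    (hv' : v' ∈ Subtype.val '' c.supp) : False := by
  classical
  obtain ⟨x0, hx0, hx0v⟩ := hv'
  have hvv' : v ≠ v' := fun h => x0.2 (hx0v.trans h.symm)
  set Cv : Set V := Subtype.val '' c.supp with hCv
  have hv'C : v' ∈ Cv := ⟨x0, hx0, hx0v⟩
  have hvnotC : v ∉ Cv := by rintro ⟨y, -, hy⟩; exact y.2 hy
  -- every vertex outside Cv is reachable to v in G - v'
  have key : ∀ b, b ∉ Cv → ∀ (hbv' : b ≠ v'),
      (deleteVert G v').Reachable ⟨b, hbv'⟩ ⟨v, hvv'⟩ := by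
    intro b hb hbv'
    by_cases hbv : b = v
    · subst hbv; exact Reachable.refl _
    · obtain ⟨p⟩ := hG.preconnected b v
      obtain ⟨a, ha, hadj, hr⟩ := reach_avoid p hbv
      obtain ⟨q⟩ := hr
      have hsupp : ∀ u ∈ q.support, (u : V) ≠ v' := by
        intro u hu heq
        have hux : u = x0 := Subtype.ext (heq.trans hx0v.symm)
        have hreach := reachable_of_mem_support q hu
        have hmem : (⟨b, hbv⟩ : {w : V // w ≠ v}) ∈ c.supp := by
          rw [ConnectedComponent.mem_supp_iff]
          rw [ConnectedComponent.eq.mpr (hux ▸ hreach)]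
          exact (ConnectedComponent.mem_supp_iff _ _).mp hx0
        exact hb ⟨⟨b, hbv⟩, hmem, rfl⟩
      have hav' : a ≠ v' := hsupp ⟨a, ha⟩ q.end_mem_support
      have hr2 := walk_transfer q hsupp hbv' hav'
      have hadj2 : (deleteVert G v').Adj ⟨a, hav'⟩ ⟨v, hvv'⟩ := hadj
      exact hr2.trans hadj2.reachable
  set D := (deleteVert G v').connectedComponentMk ⟨v, hvv'⟩ with hD
  have hcompl : Cvᶜ ⊆ Subtype.val '' D.supp := by
    intro b hb
    have hbv' : b ≠ v' := fun h => hb (h ▸ hv'C)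
    exact ⟨⟨b, hbv'⟩, (ConnectedComponent.mem_supp_iff _ _).mpr
      (ConnectedComponent.eq.mpr (key b hb hbv')), rfl⟩
  have hcardCv : Cv.ncard = Fintype.card W := card_supp e
  have hcardD : Fintype.card V - Fintype.card W ≤ (Subtype.val '' D.supp).ncard := by
    have h1 := Set.ncard_add_ncard_compl Cv (Set.toFinite _) (Set.toFinite _)
    have h2 := Set.ncard_le_ncard hcompl (Set.toFinite _)
    rw [Nat.card_eq_fintype_card] at h1
    omega
  have hDne : c' ≠ D := by
    intro h
    have := card_supp e'
    rw [h] at this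
    omega
  have hsub : Subtype.val '' c'.supp ⊆ Cv := by
    rintro _ ⟨z, hz, rfl⟩
    by_contra hzC
    have hmemD : z ∈ D.supp := by
      have := (ConnectedComponent.mem_supp_iff D ⟨(z : V), z.2⟩).mpr
        (ConnectedComponent.eq.mpr (key z hzC z.2))
      rwa [Subtype.eta] at this
    rw [ConnectedComponent.mem_supp_iff] at hmemD hz
    exact hDne (hz ▸ hmemD ▸ rfl)
  have hv'notc' : v' ∉ Subtype.val '' c'.supp := by rintro ⟨y, -, hy⟩; exact y.2 hy
  have hins : insert v' (Subtype.val '' c'.supp) ⊆ Cv := by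
    intro x hx
    rcases Set.mem_insert_iff.mp hx with rfl | hx
    · exact hv'C
    · exact hsub hx
  have h4 := Set.ncard_le_ncard hins (Set.toFinite _)
  rw [Set.ncard_insert_of_notMem hv'notc' (Set.toFinite _), card_supp e', hcardCv] at h4
  omega

lemma disjoint_comps [Fintype V] [Fintype W]
    (hG : G.Connected)
    {v v' : V} (hne : v ≠ v')
    {c : (deleteVert G v).ConnectedComponent} {c' : (deleteVert G v').ConnectedComponent}
    (e : ((deleteVert G v).induce c.supp ≃g H))
    (e' : ((deleteVert G v').induce c'.supp ≃g H))
    (hv'notC : v' ∉ Subtype.val '' c.supp) (hvnotC' : v ∉ Subtype.val '' c'.supp)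
    {x : V} (hx : x ∈ Subtype.val '' c.supp) (hx' : x ∈ Subtype.val '' c'.supp) : False := by
  classical
  obtain ⟨x1, hx1, hx1v⟩ := hx
  obtain ⟨x2, hx2, hx2v⟩ := hx'
  have hxv : x ≠ v := fun h => x1.2 (hx1v.trans h)
  have hxv' : x ≠ v' := fun h => x2.2 (hx2v.trans h)
  -- Cv' ⊆ Cv
  have hsub : Subtype.val '' c'.supp ⊆ Subtype.val '' c.supp := by
    rintro _ ⟨z, hz, rfl⟩
    have hzv : (z : V) ≠ v := fun h => hvnotC' (h ▸ ⟨z, hz, rfl⟩)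
    have hr : (deleteVert G v').Reachable x2 z := by
      rw [ConnectedComponent.mem_supp_iff] at hx2 hz
      exact ConnectedComponent.eq.mp (hx2.trans hz.symm)
    obtain ⟨q⟩ := hr
    have hsupp : ∀ u ∈ q.support, (u : V) ≠ v := by
      intro u hu h
      have : u ∈ c'.supp := by
        rw [ConnectedComponent.mem_supp_iff]
        rw [← (ConnectedComponent.mem_supp_iff _ _).mp hx2]
        exact (ConnectedComponent.eq.mpr (reachable_of_mem_support q hu)).symm
      exact hvnotC' (h ▸ ⟨u, this, rfl⟩)
    have hr2 := walk_transfer q hsupp (hx2v ▸ hxv) hzv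
    have hmem : (⟨(z : V), hzv⟩ : {w : V // w ≠ v}) ∈ c.supp := by
      rw [ConnectedComponent.mem_supp_iff]
      have h1 : (⟨(x2 : V), hx2v ▸ hxv⟩ : {w : V // w ≠ v}) = x1 :=
        Subtype.ext (hx2v.trans hx1v.symm)
      rw [← (ConnectedComponent.mem_supp_iff _ _).mp hx1, ← h1]
      exact (ConnectedComponent.eq.mpr hr2).symm
    exact ⟨⟨(z : V), hzv⟩, hmem, rfl⟩
  have heq : Subtype.val '' c'.supp = Subtype.val '' c.supp :=
    Set.eq_of_subset_of_ncard_le hsub (by rw [card_supp e, card_supp e']) (Set.toFinite _)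
  -- closure contradiction
  have hvnotC : v ∉ Subtype.val '' c.supp := by rintro ⟨y, -, hy⟩; exact y.2 hy
  obtain ⟨p⟩ := hG.preconnected x v
  obtain ⟨a, ha, b, hb, hadj⟩ := frontier_lemma (C := Subtype.val '' c.supp) p ⟨x1, hx1, hx1v⟩ hvnotC
  by_cases hbv : b = v
  · subst hbv
    rw [← heq] at ha
    obtain ⟨a2, ha2, rfl⟩ := ha
    exact hvnotC' ⟨_, mem_supp_of_adj ha2 hne hadj, rfl⟩
  · obtain ⟨a1, ha1, rfl⟩ := ha
    exact hb ⟨_, mem_supp_of_adj ha1 hbv hadj, rfl⟩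

lemma pair_disj [Fintype V] [Fintype W]
    (hG : G.Connected) (hsize : 2 * Fintype.card W < Fintype.card V)
    {v v' : V} (hne : v ≠ v')
    {c : (deleteVert G v).ConnectedComponent} {c' : (deleteVert G v').ConnectedComponent}
    (e : ((deleteVert G v).induce c.supp ≃g H))
    (e' : ((deleteVert G v').induce c'.supp ≃g H))
    {x : V} (hx : x ∈ insert v (Subtype.val '' c.supp))
    (hx' : x ∈ insert v' (Subtype.val '' c'.supp)) : False := by
  have hv'notC : v' ∉ Subtype.val '' c.supp := fun h => notMem_other hG hsize e e' h
  have hvnotC' : v ∉ Subtype.val '' c'.supp := fun h => notMem_other hG hsize e' e h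
  rcases Set.mem_insert_iff.mp hx with rfl | hx2
  · rcases Set.mem_insert_iff.mp hx' with h | h
    · exact hne h
    · exact hvnotC' h
  · rcases Set.mem_insert_iff.mp hx' with rfl | hx2'
    · exact hv'notC hx2
    · exact disjoint_comps hG hne e e' hv'notC hvnotC' hx2 hx2'

end Helpers

/-- If `G` and `H` are connected graphs with `v(H) < v(G)/2`, then at most
`⌊v(G)/(v(H)+1)⌋` vertices `v` of `G` are such that `G - v` has a connected component
isomorphic to `H`. -/
theorem stmt10 {V W : Type*} [Fintype V] [Fintype W]
    (G : SimpleGraph V) (H : SimpleGraph W)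
    (hG : G.Connected) (hH : H.Connected)
    (hsize : 2 * Fintype.card W < Fintype.card V) :
    {v : V | ∃ c : (deleteVert G v).ConnectedComponent,
        Nonempty ((deleteVert G v).induce c.supp ≃g H)}.ncard ≤
      Fintype.card V / (Fintype.card W + 1) := by
  classical
  set P := fun v : V => ∃ c : (deleteVert G v).ConnectedComponent,
      Nonempty ((deleteVert G v).induce c.supp ≃g H) with hP
  have hAfin : {v : V | P v}.Finite := Set.toFinite _
  let f : V → Finset V := fun v =>
    if h : P v then ((insert v (Subtype.val '' h.choose.supp)).toFinite.toFinset) else ∅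
  have hcard : ∀ v, P v → (f v).card = Fintype.card W + 1 := by
    intro v h
    simp only [f, dif_pos h]
    rw [← Set.ncard_eq_toFinset_card]
    rw [Set.ncard_insert_of_notMem (by rintro ⟨y, -, hy⟩; exact y.2 hy) (Set.toFinite _)]
    rw [card_supp h.choose_spec.some]
  have hdisj : ∀ v ∈ hAfin.toFinset, ∀ v' ∈ hAfin.toFinset, v ≠ v' → Disjoint (f v) (f v') := by
    intro v hv v' hv' hne
    have h : P v := hAfin.mem_toFinset.mp hv
    have h' : P v' := hAfin.mem_toFinset.mp hv'
    rw [Finset.disjoint_left]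
    intro x hx hx'
    simp only [f, dif_pos h, Set.Finite.mem_toFinset] at hx
    simp only [f, dif_pos h', Set.Finite.mem_toFinset] at hx'
    exact pair_disj hG hsize hne h.choose_spec.some h'.choose_spec.some hx hx'
  have key : hAfin.toFinset.card * (Fintype.card W + 1) ≤ Fintype.card V := by
    calc hAfin.toFinset.card * (Fintype.card W + 1)
        = ∑ v ∈ hAfin.toFinset, (f v).card := by
          rw [Finset.sum_congr rfl (fun v hv => hcard v (hAfin.mem_toFinset.mp hv))]
          rw [Finset.sum_const, smul_eq_mul]
      _ = (hAfin.toFinset.biUnion f).card := (Finset.card_biUnion hdisj).symm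
      _ ≤ Fintype.card V := by
          rw [← Finset.card_univ]
          exact Finset.card_le_univ _
  rw [show {v : V | ∃ c : (deleteVert G v).ConnectedComponent,
      Nonempty ((deleteVert G v).induce c.supp ≃g H)} = {v : V | P v} from rfl]
  rw [Set.ncard_eq_toFinset_card _ hAfin]
  exact (Nat.le_div_iff_mul_le (Nat.succ_pos _)).mpr key
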